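/- arXiv:2206.06454 — 4 statements merged into one kernel-verified Lean document; each statement's English description precedes it below -/
import Mathlib

section
/- Let M be a cyclic G-graded R-module generated by a homogeneous element m with zero annihilator on homogeneous behavior (i.e., (0 :_R m) = (0 :_R M) = 0), and let N be a graded submodule of M. Then gw((N :_R M)) = GW(N); in particular, if N is a graded weakly primal submodule of M, then (N :_R M) is a graded weakly primal ideal of R. -/
variable {G R M : Type*}
variable [AddCommGroup G] [DecidableEq G] [CommRing R] [AddCommGroup M] [Module R M]
variable (𝒜 : G → AddSubgroup R) (ℳ : G → AddSubgroup M)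
variable [GradedRing 𝒜] [DirectSum.Decomposition ℳ] [SetLike.GradedSMul 𝒜 ℳ]

/-- `N` is a graded submodule of the graded module `M`. -/
def IsGradedSubmodule (N : Submodule R M) : Prop :=
  ∀ (i : G) ⦃m : M⦄, m ∈ N → (DirectSum.decompose ℳ m i : M) ∈ N

/-- `GW(N)`: the set of homogeneous elements of `R` that are not graded weakly prime to `N`,
i.e. those `x` with `0 ≠ x • m ∈ N` for some homogeneous `m ∉ N`. -/
def GWN (N : Submodule R M) : Set R :=
  {x | SetLike.IsHomogeneousElem 𝒜 x ∧
    ∃ m : M, SetLike.IsHomogeneousElem ℳ m ∧ m ∉ N ∧ x • m ∈ N ∧ x • m ≠ 0}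

/-- `G(N)`: the set of homogeneous elements of `R` that are not graded prime to `N`. -/
def GN (N : Submodule R M) : Set R :=
  {x | SetLike.IsHomogeneousElem 𝒜 x ∧
    ∃ m : M, SetLike.IsHomogeneousElem ℳ m ∧ m ∉ N ∧ x • m ∈ N}

/-- `gw(P)`: the homogeneous elements of `R` not graded weakly prime to the ideal `P`. -/
def gwI (P : Ideal R) : Set R :=
  {x | SetLike.IsHomogeneousElem 𝒜 x ∧
    ∃ y : R, SetLike.IsHomogeneousElem 𝒜 y ∧ y ∉ P ∧ x * y ∈ P ∧ x * y ≠ 0}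

/-- `N` is a graded weakly primal submodule: `GW(N) ∪ {0}` is (the homogeneous part of)
a graded ideal of `R`. -/
def IsGradedWeaklyPrimal (N : Submodule R M) : Prop :=
  ∃ I : Ideal R, I.IsHomogeneous 𝒜 ∧
    ∀ x : R, SetLike.IsHomogeneousElem 𝒜 x → (x ∈ I ↔ x ∈ GWN 𝒜 ℳ N ∨ x = 0)

/-- `N` is a graded primal submodule: `G(N)` is (the homogeneous part of) a graded ideal. -/
def IsGradedPrimal (N : Submodule R M) : Prop :=
  ∃ I : Ideal R, I.IsHomogeneous 𝒜 ∧
    ∀ x : R, SetLike.IsHomogeneousElem 𝒜 x → (x ∈ I ↔ x ∈ GN 𝒜 ℳ N)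

/-- `P` is a graded weakly primal ideal of `R`. -/
def IsGradedWeaklyPrimalIdeal (P : Ideal R) : Prop :=
  ∃ I : Ideal R, I.IsHomogeneous 𝒜 ∧
    ∀ x : R, SetLike.IsHomogeneousElem 𝒜 x → (x ∈ I ↔ x ∈ gwI 𝒜 P ∨ x = 0)

/-- `N` is a graded `P`-weakly primal submodule: `P` is graded and its homogeneous part
is `GW(N) ∪ {0}`. -/
def IsGPWeaklyPrimal (P : Ideal R) (N : Submodule R M) : Prop :=
  P.IsHomogeneous 𝒜 ∧
    ∀ x : R, SetLike.IsHomogeneousElem 𝒜 x → (x ∈ P ↔ x ∈ GWN 𝒜 ℳ N ∨ x = 0)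

/-- A graded weakly prime ideal of `R`. -/
def IsGradedWeaklyPrimeIdeal (I : Ideal R) : Prop :=
  I.IsHomogeneous 𝒜 ∧
    ∀ x y : R, SetLike.IsHomogeneousElem 𝒜 x → SetLike.IsHomogeneousElem 𝒜 y →
      x * y ∈ I → x * y ≠ 0 → x ∈ I ∨ y ∈ I


private lemma decompose_smul_single {g : G} (hg : m ∈ ℳ g) (y : R) (i : G) :
    (DirectSum.decompose ℳ (y • m) i : M) = (DirectSum.decompose 𝒜 y (i - g) : R) • m := by
  induction y using DirectSum.Decomposition.inductionOn 𝒜 with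
  | zero => simp
  | @homogeneous j y =>
    have hy : (y : R) • m ∈ ℳ (j + g) := SetLike.GradedSMul.smul_mem y.2 hg
    by_cases h : i = j + g
    · subst h
      rw [DirectSum.decompose_of_mem_same ℳ hy]
      rw [show j + g - g = j by abel, DirectSum.decompose_of_mem_same 𝒜 y.2]
    · rw [DirectSum.decompose_of_mem_ne ℳ hy (Ne.symm h),
        DirectSum.decompose_of_mem_ne 𝒜 y.2
          (fun hj => h (by rw [hj, sub_add_cancel])), zero_smul]
  | add a b ha hb =>
    rw [add_smul, DirectSum.decompose_add, DirectSum.add_apply, AddSubgroup.coe_add, ha, hb,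
      DirectSum.decompose_add, DirectSum.add_apply, AddSubgroup.coe_add, add_smul]

/-- For a faithful cyclic graded module `M = R•m`, `gw((N :_R M)) = GW(N)`; in particular,
if `N` is graded weakly primal then `(N :_R M)` is a graded weakly primal ideal. -/
theorem cyclic_colon_weakly_primal (N : Submodule R M) (hN : IsGradedSubmodule ℳ N)
    (m : M) (hm : SetLike.IsHomogeneousElem ℳ m)
    (hgen : ∀ x : M, ∃ r : R, x = r • m)
    (hfaith : ∀ r : R, r • m = 0 → r = 0) :
    gwI 𝒜 (N.colon ⊤) = GWN 𝒜 ℳ N ∧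
      (IsGradedWeaklyPrimal 𝒜 ℳ N → IsGradedWeaklyPrimalIdeal 𝒜 (N.colon ⊤)) := by
  have key : gwI 𝒜 (N.colon ⊤) = GWN 𝒜 ℳ N := by
    ext x
    constructor
    · rintro ⟨hx, y, hy, hyP, hxyP, hxy0⟩
      obtain ⟨g, hg⟩ := hm
      obtain ⟨b, hb⟩ := hy
      refine ⟨hx, y • m, ⟨b + g, SetLike.GradedSMul.smul_mem hb hg⟩, ?_, ?_, ?_⟩
      · intro hmem
        apply hyP
        rw [Submodule.mem_colon]
        intro p _
        obtain ⟨r, rfl⟩ := hgen p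
        rw [smul_comm]
        exact N.smul_mem r hmem
      · rw [← mul_smul]
        exact Submodule.mem_colon.mp hxyP m trivial
      · rw [← mul_smul]
        intro h0
        exact hxy0 (hfaith _ h0)
    · rintro ⟨hx, m', hm', hm'N, hxm'N, hxm'0⟩
      obtain ⟨y, rfl⟩ := hgen m'
      obtain ⟨i, hi⟩ := hm'
      obtain ⟨g, hg⟩ := hm
      set y' : R := (DirectSum.decompose 𝒜 y (i - g) : R) with hy'
      have hkey : y' • m = y • m := by
        rw [hy', ← decompose_smul_single 𝒜 ℳ hg y i,
          DirectSum.decompose_of_mem_same ℳ hi]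
      refine ⟨hx, y', ⟨i - g, SetLike.coe_mem _⟩, ?_, ?_, ?_⟩
      · intro hmem
        exact hm'N (hkey ▸ Submodule.mem_colon.mp hmem m trivial)
      · rw [Submodule.mem_colon]
        intro p _
        obtain ⟨r, rfl⟩ := hgen p
        rw [smul_comm, mul_smul, hkey]
        exact N.smul_mem r hxm'N
      · intro h0
        apply hxm'0
        rw [← hkey, ← mul_smul, h0, zero_smul]
  refine ⟨key, ?_⟩
  rintro ⟨I, hI, hIspec⟩
  exact ⟨I, hI, fun x hx => by rw [key]; exact hIspec x hx⟩
end

section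
/- Let M be a G-graded R-module and N a graded weakly primal submodule of M. Then GW(N) ∪ {0} is a graded weakly prime ideal of R; i.e., if x, y ∈ h(R) with 0 ≠ xy ∈ GW(N), then x ∈ GW(N) or y ∈ GW(N). -/
variable {G R M : Type*}
variable [AddCommGroup G] [DecidableEq G] [CommRing R] [AddCommGroup M] [Module R M]
variable (𝒜 : G → AddSubgroup R) (ℳ : G → AddSubgroup M)
variable [GradedRing 𝒜] [DirectSum.Decomposition ℳ] [SetLike.GradedSMul 𝒜 ℳ]

/-- If `N` is graded weakly primal, then `GW(N) ∪ {0}` is a graded weakly prime ideal: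
if `0 ≠ x*y ∈ GW(N)` with `x, y` homogeneous then `x ∈ GW(N)` or `y ∈ GW(N)`. -/
theorem GWN_weakly_prime (N : Submodule R M) (hN : IsGradedSubmodule ℳ N)
    (h : IsGradedWeaklyPrimal 𝒜 ℳ N) :
    (∀ x y : R, SetLike.IsHomogeneousElem 𝒜 x → SetLike.IsHomogeneousElem 𝒜 y →
        x * y ∈ GWN 𝒜 ℳ N → x * y ≠ 0 → x ∈ GWN 𝒜 ℳ N ∨ y ∈ GWN 𝒜 ℳ N) ∧
      ∀ P : Ideal R, IsGPWeaklyPrimal 𝒜 ℳ P N → IsGradedWeaklyPrimeIdeal 𝒜 P := by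
  have key : ∀ x y : R, SetLike.IsHomogeneousElem 𝒜 x → SetLike.IsHomogeneousElem 𝒜 y →
      x * y ∈ GWN 𝒜 ℳ N → x * y ≠ 0 → x ∈ GWN 𝒜 ℳ N ∨ y ∈ GWN 𝒜 ℳ N := by
    rintro x y hx hy ⟨-, m, hm, hmN, hxyN, hxy0⟩ -
    by_cases hym : y • m ∈ N
    · right
      exact ⟨hy, m, hm, hmN, hym, fun h0 => hxy0 (by rw [mul_smul, h0, smul_zero])⟩
    · left
      refine ⟨hx, y • m, hy.graded_smul hm, hym, ?_, ?_⟩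
      · rwa [smul_smul]
      · rw [smul_smul]; exact hxy0
  refine ⟨key, fun P hP => ⟨hP.1, fun x y hx hy hxyP hxy0 => ?_⟩⟩
  rcases (hP.2 _ (SetLike.IsHomogeneousElem.mul hx hy)).1 hxyP with hxy | hxy
  · rcases key x y hx hy hxy hxy0 with h | h
    · exact Or.inl ((hP.2 x hx).2 (Or.inl h))
    · exact Or.inr ((hP.2 y hy).2 (Or.inl h))
  · exact absurd hxy hxy0
end

section
/- Let M be a G-graded R-module, S ⊆ h(R) a multiplicatively closed set, and N a graded weakly primal submodule of M with GW(N) ∩ S = ∅. If n ∈ h(M), s ∈ S, and n/s is a nonzero element of the localized submodule N_S ⊆ M_S, then n ∈ N. -/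
variable {G R M : Type*}
variable [AddCommGroup G] [DecidableEq G] [CommRing R] [AddCommGroup M] [Module R M]
variable (𝒜 : G → AddSubgroup R) (ℳ : G → AddSubgroup M)
variable [GradedRing 𝒜] [DirectSum.Decomposition ℳ] [SetLike.GradedSMul 𝒜 ℳ]

/-- A homogeneous element of the localized ring `R_S`: a fraction `r/s` with `r` homogeneous. -/
def HomogLocR (S : Submonoid R) (x : Localization S) : Prop :=
  ∃ (r : R) (s : S), SetLike.IsHomogeneousElem 𝒜 r ∧ x = Localization.mk r s

/-- A homogeneous element of the localized module `M_S`: a fraction `m/s` with `m` homogeneous. -/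
def HomogLocM (S : Submonoid R) (x : LocalizedModule S M) : Prop :=
  ∃ (m : M) (s : S), SetLike.IsHomogeneousElem ℳ m ∧ x = LocalizedModule.mk m s

/-- The localization `N_S` of a submodule `N` of `M`, as a submodule of `M_S` over `R_S`. -/
def locSub (S : Submonoid R) (N : Submodule R M) :
    Submodule (Localization S) (LocalizedModule S M) :=
  Submodule.span (Localization S) (LocalizedModule.mkLinearMap S M '' (N : Set M))

/-- `GW(K)` for a submodule `K` of the localized module `M_S`. -/
def GWNLoc (S : Submonoid R) (K : Submodule (Localization S) (LocalizedModule S M)) :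
    Set (Localization S) :=
  {ξ | HomogLocR 𝒜 S ξ ∧
    ∃ μ : LocalizedModule S M, HomogLocM ℳ S μ ∧ μ ∉ K ∧ ξ • μ ∈ K ∧ ξ • μ ≠ 0}

/-- A graded submodule of `M_S`: generated by its homogeneous elements. -/
def IsGradedLocSub (S : Submonoid R) (K : Submodule (Localization S) (LocalizedModule S M)) :
    Prop :=
  K = Submodule.span (Localization S) {x | x ∈ K ∧ HomogLocM ℳ S x}

/-- A graded ideal of `R_S`: generated by its homogeneous elements. -/
def IsGradedLocIdeal (S : Submonoid R) (P : Ideal (Localization S)) : Prop :=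
  P = Ideal.span {x | x ∈ P ∧ HomogLocR 𝒜 S x}

/-- `K` is a graded `P`-weakly primal submodule of `M_S`. -/
def IsGPWeaklyPrimalLoc (S : Submonoid R) (P : Ideal (Localization S))
    (K : Submodule (Localization S) (LocalizedModule S M)) : Prop :=
  IsGradedLocIdeal 𝒜 S P ∧
    ∀ ξ : Localization S, HomogLocR 𝒜 S ξ →
      (ξ ∈ P ↔ ξ ∈ GWNLoc 𝒜 ℳ S K ∨ ξ = 0)

/-- If `N` is graded weakly primal with `GW(N) ∩ S = ∅` and `0 ≠ n/s ∈ N_S` with `n`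
homogeneous, then `n ∈ N`. -/
theorem mem_of_mk_mem_locSub (S : Submonoid R) (hS : ∀ s ∈ S, SetLike.IsHomogeneousElem 𝒜 s)
    (N : Submodule R M) (hN : IsGradedSubmodule ℳ N)
    (hwp : IsGradedWeaklyPrimal 𝒜 ℳ N)
    (hdisj : ∀ s ∈ S, s ∉ GWN 𝒜 ℳ N)
    (n : M) (hn : SetLike.IsHomogeneousElem ℳ n) (s : S)
    (hmem : LocalizedModule.mk n s ∈ locSub S N)
    (hne : LocalizedModule.mk n s ≠ (0 : LocalizedModule S M)) :
    n ∈ N := by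
  -- rewrite locSub as localized'
  have hloc : locSub S N = N.localized' (Localization S) S (LocalizedModule.mkLinearMap S M) := by
    rw [locSub]
    conv_rhs => rw [← Submodule.span_eq N]
    exact (Submodule.localized'_span (Localization S) S (LocalizedModule.mkLinearMap S M)
      (N : Set M)).symm
  rw [hloc, Submodule.mem_localized'] at hmem
  obtain ⟨m, hmN, t, ht⟩ := hmem
  rw [show IsLocalizedModule.mk' (S := S) (LocalizedModule.mkLinearMap S M) m t = LocalizedModule.mk m t
    from (IsLocalizedModule.mk_eq_mk' t m).symm] at ht
  obtain ⟨u, hu⟩ := LocalizedModule.mk_eq.mp ht.symm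
  -- (u*t) • n ∈ N
  have hin : ((u : R) * (t : R)) • n ∈ N := by
    rw [mul_smul]
    have : (u : R) • (t : R) • n = (u : R) • (s : R) • m := by
      simpa [Submonoid.smul_def] using hu
    rw [this]
    exact N.smul_mem _ (N.smul_mem _ hmN)
  by_contra hnN
  set c : R := (u : R) * (t : R) with hc
  have hcS : c ∈ S := S.mul_mem u.2 t.2
  rcases eq_or_ne (c • n) 0 with h0 | h0
  · -- then mk n s = 0
    apply hne
    rw [← LocalizedModule.zero_mk (1 : S), LocalizedModule.mk_eq]
    refine ⟨⟨c, hcS⟩ * s, ?_⟩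
    simp only [one_smul, smul_zero, Submonoid.smul_def, Submonoid.coe_mul, mul_smul]
    rw [smul_comm (c : R) (s : R) n, h0, smul_zero]
  · exact hdisj c hcS ⟨hS c hcS, n, hn, hnN, hin, h0⟩
end

section
/- Let M = ℤ/24ℤ as a trivially graded ℤ-module (graded by a group G with M_e = M and M_g = 0 for g ≠ e) and N = 8ℤ/24ℤ. Then 2 and 4 are not graded weakly prime to N, but 6 = 2 + 4 is graded weakly prime to N; hence GW(N) is not closed under addition and N is not a graded weakly primal submodule of M. -/
/-- `GW(N)` for the trivially graded `ℤ`-module `ℤ/24ℤ` with `N = 8ℤ/24ℤ` (with the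
trivial grading every element is homogeneous). -/
def GWN24 : Set ℤ :=
  {x : ℤ | ∃ m : ZMod 24, m ∉ Submodule.span ℤ {(8 : ZMod 24)} ∧
    x • m ∈ Submodule.span ℤ {(8 : ZMod 24)} ∧ x • m ≠ 0}

lemma mem_span8 (m : ZMod 24) :
    m ∈ Submodule.span ℤ {(8 : ZMod 24)} ↔ ∃ c : ZMod 24, c * 8 = m := by
  rw [Submodule.mem_span_singleton]
  constructor
  · rintro ⟨n, rfl⟩
    exact ⟨(n : ZMod 24), by rw [zsmul_eq_mul]⟩
  · rintro ⟨c, rfl⟩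
    obtain ⟨n, rfl⟩ := ZMod.intCast_surjective c
    exact ⟨n, by rw [zsmul_eq_mul]⟩

lemma smul_eq (x : ℤ) (m : ZMod 24) : x • m = (x : ZMod 24) * m := zsmul_eq_mul m x

/-- In the trivially graded `ℤ`-module `ℤ/24ℤ` with `N = 8ℤ/24ℤ`: `2` and `4` are not
graded weakly prime to `N`, but `6 = 2 + 4` is; hence `GW(N)` is not closed under
addition and `N` is not a graded weakly primal submodule. -/
theorem zmod24_not_weakly_primal :
    (2 : ℤ) ∈ GWN24 ∧ (4 : ℤ) ∈ GWN24 ∧ (6 : ℤ) ∉ GWN24 ∧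
      ¬ ∃ I : Ideal ℤ, (I : Set ℤ) = GWN24 ∪ {0} := by
  have h2 : (2 : ℤ) ∈ GWN24 := by
    refine ⟨4, ?_, ?_, ?_⟩
    · rw [mem_span8]; decide
    · rw [mem_span8, smul_eq]; decide
    · rw [smul_eq]; decide
  have h4 : (4 : ℤ) ∈ GWN24 := by
    refine ⟨2, ?_, ?_, ?_⟩
    · rw [mem_span8]; decide
    · rw [mem_span8, smul_eq]; decide
    · rw [smul_eq]; decide
  have h6 : (6 : ℤ) ∉ GWN24 := by
    rintro ⟨m, -, hmem, hne⟩
    rw [mem_span8] at hmem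
    rw [smul_eq] at hmem hne
    revert hmem hne
    revert m
    decide
  refine ⟨h2, h4, h6, ?_⟩
  rintro ⟨I, hI⟩
  have h2I : (2 : ℤ) ∈ I := by rw [← SetLike.mem_coe, hI]; exact Or.inl h2
  have h4I : (4 : ℤ) ∈ I := by rw [← SetLike.mem_coe, hI]; exact Or.inl h4
  have h6I : (6 : ℤ) ∈ I := by have := I.add_mem h2I h4I; norm_num at this; exact this
  rw [← SetLike.mem_coe, hI] at h6I
  rcases h6I with h | h
  · exact h6 h
  · simp at h
end
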